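/- There exists an injective group homomorphism θ from the free group F₂ on two generators to itself such that the image θ(F₂) is not co-amenable in F₂. -/

import Mathlib

/-- The space ℓ∞(X) of bounded real-valued functions on `X`,
as a submodule of `X → ℝ`. -/
def BddFns (X : Type*) : Submodule ℝ (X → ℝ) where
  carrier := {f | ∃ C : ℝ, ∀ x, |f x| ≤ C}
  add_mem' := by
    rintro f g ⟨C, hC⟩ ⟨D, hD⟩
    exact ⟨C + D, fun x => (abs_add_le _ _).trans (add_le_add (hC x) (hD x))⟩
  zero_mem' := ⟨0, fun x => by simp⟩
  smul_mem' := by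
    rintro c f ⟨C, hC⟩
    exact ⟨|c| * C, fun x => by
      simp only [Pi.smul_apply, smul_eq_mul, abs_mul]
      exact mul_le_mul_of_nonneg_left (hC x) (abs_nonneg c)⟩

/-- Left translation of a function on a `G`-set: `(g · f)(x) = f (g⁻¹ • x)`. -/
def lshift {G X : Type*} [Group G] [MulAction G X] (g : G) (f : X → ℝ) : X → ℝ :=
  fun x => f (g⁻¹ • x)

lemma lshift_mem {G X : Type*} [Group G] [MulAction G X] (g : G) {f : X → ℝ}
    (hf : f ∈ BddFns X) : lshift g f ∈ BddFns X := by
  obtain ⟨C, hC⟩ := hf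
  exact ⟨C, fun x => hC _⟩

/-- A `G`-invariant mean on ℓ∞(X): a linear functional `m` with `m 1 = 1`,
`m f ≥ 0` for `f ≥ 0` pointwise, invariant under the `G`-action. -/
structure InvariantMean (G : Type*) (X : Type*) [Group G] [MulAction G X] where
  toFun : (BddFns X) →ₗ[ℝ] ℝ
  norm_one : toFun ⟨(fun _ => 1), ⟨1, fun _ => by norm_num⟩⟩ = 1
  nonneg : ∀ f : BddFns X, (∀ x, 0 ≤ (f : X → ℝ) x) → 0 ≤ toFun f
  invariant : ∀ (g : G) (f : BddFns X),
    toFun ⟨lshift g (f : X → ℝ), lshift_mem g f.2⟩ = toFun f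

/-- A subgroup `H ≤ G` is co-amenable in `G` if there is a `G`-invariant mean
on ℓ∞(G/H), where `G/H` is the left coset space. -/
def Subgroup.Coamenable {G : Type*} [Group G] (H : Subgroup G) : Prop :=
  Nonempty (InvariantMean G (G ⧸ H))

/-- A group is amenable if there is a left-translation-invariant mean on ℓ∞(G). -/
def AmenableGroup (G : Type*) [Group G] : Prop :=
  Nonempty (InvariantMean G G)

/- ================= auxiliary development ================= -/

namespace NCA

open FreeGroup

abbrev F := FreeGroup (Fin 2)

def ga : F := FreeGroup.of 0
def gb : F := FreeGroup.of 1

abbrev La : Fin 2 × Bool := (0, true)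
abbrev La' : Fin 2 × Bool := (0, false)
abbrev Lb : Fin 2 × Bool := (1, true)
abbrev Lb' : Fin 2 × Bool := (1, false)

/-- head letter of the reduced word -/
def hdw (y : F) : Option (Fin 2 × Bool) := y.toWord.head?

def y₀ : F := FreeGroup.mk [La']
def p₁ : F := 1
def p₂ : F := FreeGroup.mk [La', La']
def q₁ : F := FreeGroup.mk [Lb, La']
def q₂ : F := FreeGroup.mk [Lb', La']

/-- the perturbed left translation by `a` -/
noncomputable def A : Equiv.Perm F := (Equiv.swap p₁ p₂).trans (Equiv.mulLeft ga)
/-- the perturbed left translation by `b` -/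
noncomputable def B : Equiv.Perm F := (Equiv.swap q₁ q₂).trans (Equiv.mulLeft gb)

lemma A_apply (y : F) : A y = ga * (Equiv.swap p₁ p₂ y) := rfl
lemma B_apply (y : F) : B y = gb * (Equiv.swap q₁ q₂ y) := rfl

lemma A_inv_apply (y : F) : A⁻¹ y = Equiv.swap p₁ p₂ (ga⁻¹ * y) := by
  show A.symm y = _
  simp [A, Equiv.symm_trans_apply, Equiv.symm_swap]

lemma B_inv_apply (y : F) : B⁻¹ y = Equiv.swap q₁ q₂ (gb⁻¹ * y) := by
  show B.symm y = _
  simp [B, Equiv.symm_trans_apply, Equiv.symm_swap]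

lemma cons_toWord (ξ : Fin 2 × Bool) (y : F) (h : y.toWord.head? ≠ some (ξ.1, !ξ.2)) :
    (FreeGroup.mk [ξ] * y).toWord = ξ :: y.toWord := by
  conv_lhs => rw [← FreeGroup.mk_toWord (x := y)]
  rw [FreeGroup.mul_mk, FreeGroup.toWord_mk]
  have hy : reduce y.toWord = y.toWord := FreeGroup.reduce_toWord y
  show reduce (ξ :: y.toWord) = _
  rw [FreeGroup.reduce.cons, hy]
  cases hw : y.toWord with
  | nil => rfl
  | cons hd tl =>
    have : ¬ (ξ.1 = hd.1 ∧ ξ.2 = !hd.2) := by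
      rintro ⟨h1, h2⟩
      apply h
      rw [hw]
      simp only [List.head?_cons, Option.some_inj]
      exact Prod.ext h1.symm (by simp [h2])
    simp [this]

lemma hdw_cons (ξ : Fin 2 × Bool) (y : F) (h : hdw y ≠ some (ξ.1, !ξ.2)) :
    hdw (FreeGroup.mk [ξ] * y) = some ξ := by
  unfold hdw at *
  rw [cons_toWord ξ y h]
  rfl

lemma ga_inv : ga⁻¹ = FreeGroup.mk [La'] := by decide
lemma gb_inv : gb⁻¹ = FreeGroup.mk [Lb'] := by decide
lemma ga_mk : ga = FreeGroup.mk [La] := rfl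
lemma gb_mk : gb = FreeGroup.mk [Lb] := rfl

/- the six sets -/
def S₁ (y : F) : Prop := hdw y = some La ∨ y = y₀ ∨ y = 1
def S₂ (y : F) : Prop := hdw y = some La' ∧ y ≠ y₀
def S₃ (y : F) : Prop := hdw y = some Lb ∨ y = y₀
def S₄ (y : F) : Prop := hdw y = some Lb'
def S₅ (y : F) : Prop := hdw y = some La ∨ hdw y = some Lb ∨ y = 1
def S₆ (y : F) : Prop := hdw y = some Lb'

instance : DecidablePred S₁ := fun _ => inferInstanceAs (Decidable (_ ∨ _))
instance : DecidablePred S₂ := fun _ => inferInstanceAs (Decidable (_ ∧ _))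
instance : DecidablePred S₃ := fun _ => inferInstanceAs (Decidable (_ ∨ _))
instance : DecidablePred S₄ := fun _ => inferInstanceAs (Decidable (_ = _))
instance : DecidablePred S₅ := fun _ => inferInstanceAs (Decidable (_ ∨ _))
instance : DecidablePred S₆ := fun _ => inferInstanceAs (Decidable (_ = _))

lemma cond1 (y : F) : S₁ y ∨ S₂ (A⁻¹ y) := by
  by_cases h1 : hdw y = some La
  · exact Or.inl (Or.inl h1)
  by_cases h2 : y = y₀
  · exact Or.inl (Or.inr (Or.inl h2))
  by_cases h3 : y = 1
  · exact Or.inl (Or.inr (Or.inr h3))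
  right
  rw [A_inv_apply]
  have e1 : ga⁻¹ * y ≠ p₁ := by
    intro h; apply h1
    have : y = ga := by
      have := congrArg (fun z => ga * z) h
      simpa [p₁, mul_assoc] using this
    rw [this]; decide
  have e2 : ga⁻¹ * y ≠ p₂ := by
    intro h; apply h2
    have : y = ga * p₂ := by
      have := congrArg (fun z => ga * z) h
      simpa [mul_assoc] using this
    rw [this]; decide
  rw [Equiv.swap_apply_of_ne_of_ne e1 e2]
  constructor
  · rw [ga_inv]
    exact hdw_cons La' y (by simpa using h1)
  · intro h; apply h3
    have := congrArg (fun z => ga * z) h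
    simpa [mul_assoc, show ga * y₀ = 1 by decide] using this

lemma cond2 (y : F) : S₃ y ∨ S₄ (B⁻¹ y) := by
  by_cases h1 : hdw y = some Lb
  · exact Or.inl (Or.inl h1)
  by_cases h2 : y = y₀
  · exact Or.inl (Or.inr h2)
  right
  rw [B_inv_apply]
  have e1 : gb⁻¹ * y ≠ q₁ := by
    intro h; apply h1
    have : y = gb * q₁ := by
      have := congrArg (fun z => gb * z) h
      simpa [mul_assoc] using this
    rw [this]; decide
  have e2 : gb⁻¹ * y ≠ q₂ := by
    intro h; apply h2
    have : y = gb * q₂ := by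
      have := congrArg (fun z => gb * z) h
      simpa [mul_assoc] using this
    rw [this]; decide
  rw [Equiv.swap_apply_of_ne_of_ne e1 e2]
  rw [gb_inv]
  exact hdw_cons Lb' y (by simpa using h1)

lemma cond3 (y : F) : S₅ y ∨ S₆ (B⁻¹ (A⁻¹ y)) := by
  by_cases h1 : hdw y = some La
  · exact Or.inl (Or.inl h1)
  by_cases h2 : hdw y = some Lb
  · exact Or.inl (Or.inr (Or.inl h2))
  by_cases h3 : y = 1
  · exact Or.inl (Or.inr (Or.inr h3))
  right
  rw [A_inv_apply]
  have e1 : ga⁻¹ * y ≠ p₁ := by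
    intro h; apply h1
    have : y = ga := by
      have := congrArg (fun z => ga * z) h
      simpa [p₁, mul_assoc] using this
    rw [this]; decide
  by_cases h4 : y = y₀
  · subst h4
    have hp : ga⁻¹ * y₀ = p₂ := by decide
    rw [hp, Equiv.swap_apply_right]
    rw [B_inv_apply]
    have hq : gb⁻¹ * p₁ = gb⁻¹ := by simp [p₁]
    rw [hq]
    have e1' : (gb⁻¹ : F) ≠ q₁ := by decide
    have e2' : (gb⁻¹ : F) ≠ q₂ := by decide
    rw [Equiv.swap_apply_of_ne_of_ne e1' e2']
    show hdw (gb⁻¹) = some Lb'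
    decide
  · have e2 : ga⁻¹ * y ≠ p₂ := by
      intro h; apply h4
      have : y = ga * p₂ := by
        have := congrArg (fun z => ga * z) h
        simpa [mul_assoc] using this
      rw [this]; decide
    rw [Equiv.swap_apply_of_ne_of_ne e1 e2]
    set z := ga⁻¹ * y with hz
    have hzw : hdw z = some La' := by
      rw [hz, ga_inv]
      exact hdw_cons La' y (by simpa using h1)
    rw [B_inv_apply]
    have f1 : gb⁻¹ * z ≠ q₁ := by
      intro h
      have : z = gb * q₁ := by
        have := congrArg (fun w => gb * w) h
        simpa [mul_assoc] using this
      rw [this] at hzw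
      revert hzw; decide
    have f2 : gb⁻¹ * z ≠ q₂ := by
      intro h
      have hzy : z = gb * q₂ := by
        have := congrArg (fun w => gb * w) h
        simpa [mul_assoc] using this
      have hzy' : z = y₀ := by rw [hzy]; decide
      apply h3
      have := congrArg (fun w => ga * w) (hz.symm.trans hzy')
      simpa [mul_assoc, show ga * y₀ = 1 by decide] using this
    rw [Equiv.swap_apply_of_ne_of_ne f1 f2]
    rw [gb_inv]
    exact hdw_cons Lb' z (by simp [hzw])

lemma hdw_y₀ : hdw y₀ = some La' := by decide
lemma hdw_one : hdw (1 : F) = none := by decide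
lemma y₀_ne_one : y₀ ≠ 1 := by decide

lemma ne_one_of_hdw {y : F} {ξ} (h : hdw y = some ξ) : y ≠ 1 := by
  intro e; rw [e, hdw_one] at h; exact nomatch h

lemma S2_excl (y : F) (h : S₂ y) : ¬S₁ y ∧ ¬S₃ y ∧ ¬S₄ y ∧ ¬S₅ y ∧ ¬S₆ y := by
  obtain ⟨hh, hne⟩ := h
  have h1 : y ≠ 1 := ne_one_of_hdw hh
  refine ⟨?_, ?_, ?_, ?_, ?_⟩
  · rintro (h' | h' | h')
    · exact absurd (hh.symm.trans h') (by decide)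
    · exact hne h'
    · exact h1 h'
  · rintro (h' | h')
    · exact absurd (hh.symm.trans h') (by decide)
    · exact hne h'
  · intro h'; exact absurd (hh.symm.trans h') (by decide)
  · rintro (h' | h' | h')
    · exact absurd (hh.symm.trans h') (by decide)
    · exact absurd (hh.symm.trans h') (by decide)
    · exact h1 h'
  · intro h'; exact absurd (hh.symm.trans h') (by decide)

lemma S4_excl (y : F) (h : S₄ y) : ¬S₁ y ∧ ¬S₂ y ∧ ¬S₃ y ∧ ¬S₅ y := by
  have hh : hdw y = some Lb' := h
  have h1 : y ≠ 1 := ne_one_of_hdw hh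
  have hy₀ : y ≠ y₀ := by
    intro e; rw [e, hdw_y₀] at hh; exact absurd hh (by decide)
  refine ⟨?_, ?_, ?_, ?_⟩
  · rintro (h' | h' | h')
    · exact absurd (hh.symm.trans h') (by decide)
    · exact hy₀ h'
    · exact h1 h'
  · rintro ⟨h', _⟩; exact absurd (hh.symm.trans h') (by decide)
  · rintro (h' | h')
    · exact absurd (hh.symm.trans h') (by decide)
    · exact hy₀ h'
  · rintro (h' | h' | h')
    · exact absurd (hh.symm.trans h') (by decide)
    · exact absurd (hh.symm.trans h') (by decide)
    · exact h1 h'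

lemma S135_not_all (y : F) : ¬(S₁ y ∧ S₃ y ∧ S₅ y) := by
  rintro ⟨hS1, hS3, hS5⟩
  rcases hS1 with h1 | h1 | h1
  · rcases hS3 with h3 | h3
    · exact absurd (h1.symm.trans h3) (by decide)
    · rw [h3, hdw_y₀] at h1; exact absurd h1 (by decide)
  · subst h1
    rcases hS5 with h5 | h5 | h5
    · rw [hdw_y₀] at h5; exact absurd h5 (by decide)
    · rw [hdw_y₀] at h5; exact absurd h5 (by decide)
    · exact y₀_ne_one h5
  · subst h1
    rcases hS3 with h3 | h3
    · rw [hdw_one] at h3; exact nomatch h3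
    · exact y₀_ne_one h3.symm

lemma sum_le_two (y : F) :
    (if S₁ y then (1:ℝ) else 0) + (if S₂ y then (1:ℝ) else 0) + (if S₃ y then (1:ℝ) else 0)
      + (if S₄ y then (1:ℝ) else 0) + (if S₅ y then (1:ℝ) else 0) + (if S₆ y then (1:ℝ) else 0)
      ≤ 2 := by
  by_cases h2 : S₂ y
  · obtain ⟨n1, n3, n4, n5, n6⟩ := S2_excl y h2
    simp [h2, n1, n3, n4, n5, n6]
  by_cases h4 : S₄ y
  · obtain ⟨n1, n2, n3, n5⟩ := S4_excl y h4
    have h6 : S₆ y := h4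
    simp only [if_pos h4, if_pos h6, if_neg h2, if_neg n1, if_neg n3, if_neg n5]
    norm_num
  · have n6 : ¬ S₆ y := h4
    have h135 := S135_not_all y
    by_cases hS1 : S₁ y <;> by_cases hS3 : S₃ y <;> by_cases hS5 : S₅ y <;>
      simp_all <;> norm_num

end NCA
namespace NCA

open FreeGroup

/-- the action homomorphism -/
noncomputable def act : F →* Equiv.Perm F := FreeGroup.lift ![A, B]

lemma act_ga : act ga = A := by
  show FreeGroup.lift ![A, B] (FreeGroup.of 0) = A
  rw [FreeGroup.lift_apply_of]
  rfl

lemma act_gb : act gb = B := by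
  show FreeGroup.lift ![A, B] (FreeGroup.of 1) = B
  rw [FreeGroup.lift_apply_of]
  rfl

/-- the stabilizer of the base point under `act` -/
noncomputable def Stab : Subgroup F where
  carrier := {g | act g y₀ = y₀}
  one_mem' := by simp
  mul_mem' := by
    intro g h hg hh
    simp only [Set.mem_setOf_eq] at *
    rw [_root_.map_mul, Equiv.Perm.mul_apply, hh, hg]
  inv_mem' := by
    intro g hg
    simp only [Set.mem_setOf_eq] at *
    conv_lhs => rw [← hg]
    rw [_root_.map_inv, ← Equiv.Perm.mul_apply, inv_mul_cancel, Equiv.Perm.one_apply]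

lemma A_y₀ : A y₀ = 1 := by
  rw [A_apply, Equiv.swap_apply_of_ne_of_ne (by decide) (by decide)]
  decide

lemma A_one : A 1 = y₀ := by
  rw [A_apply]
  have h : (1 : F) = p₁ := rfl
  rw [h, Equiv.swap_apply_left]
  decide

lemma B_y₀ : B y₀ = q₁ := by
  rw [B_apply, Equiv.swap_apply_of_ne_of_ne (by decide) (by decide)]
  decide

lemma B_q₁ : B q₁ = y₀ := by
  rw [B_apply, Equiv.swap_apply_left]
  decide

lemma ga2_mem_Stab : ga * ga ∈ Stab := by
  show act (ga * ga) y₀ = y₀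
  rw [_root_.map_mul, act_ga, Equiv.Perm.mul_apply, A_y₀, A_one]

lemma gb2_mem_Stab : gb * gb ∈ Stab := by
  show act (gb * gb) y₀ = y₀
  rw [_root_.map_mul, act_gb, Equiv.Perm.mul_apply, B_y₀, B_q₁]

/-- the endomorphism θ : a ↦ a², b ↦ b² -/
def θ : F →* F := FreeGroup.lift ![ga * ga, gb * gb]

lemma θ_range_le_Stab : θ.range ≤ Stab := by
  apply FreeGroup.range_lift_le
  rintro x ⟨i, rfl⟩
  fin_cases i
  · exact ga2_mem_Stab
  · exact gb2_mem_Stab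

lemma hdw_ga_mul (y : F) (h : hdw y ≠ some La') : hdw (ga * y) = some La := by
  rw [ga_mk]; exact hdw_cons La y h

lemma hdw_gb_mul (y : F) (h : hdw y ≠ some Lb') : hdw (gb * y) = some Lb := by
  rw [gb_mk]; exact hdw_cons Lb y h

lemma hdw_ga_inv_mul (y : F) (h : hdw y ≠ some La) : hdw (ga⁻¹ * y) = some La' := by
  rw [ga_inv]; exact hdw_cons La' y (by simpa using h)

lemma hdw_gb_inv_mul (y : F) (h : hdw y ≠ some Lb) : hdw (gb⁻¹ * y) = some Lb' := by
  rw [gb_inv]; exact hdw_cons Lb' y (by simpa using h)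

/-- the ping-pong sets -/
def XX : Fin 2 → Set F := ![{y : F | hdw y = some La}, {y : F | hdw y = some Lb}]
def YY : Fin 2 → Set F := ![{y : F | hdw y = some La'}, {y : F | hdw y = some Lb'}]

lemma XX0 : XX 0 = {y : F | hdw y = some La} := rfl
lemma XX1 : XX 1 = {y : F | hdw y = some Lb} := rfl
lemma YY0 : YY 0 = {y : F | hdw y = some La'} := rfl
lemma YY1 : YY 1 = {y : F | hdw y = some Lb'} := rfl

lemma disj_hdw (o₁ o₂ : Option (Fin 2 × Bool)) (h : o₁ ≠ o₂) :
    Disjoint {y : F | hdw y = o₁} {y : F | hdw y = o₂} := by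
  rw [Set.disjoint_left]
  intro y h1 h2
  simp only [Set.mem_setOf_eq] at h1 h2
  exact h (h1.symm.trans h2)

lemma θ_injective : Function.Injective θ := by
  apply FreeGroup.injective_lift_of_ping_pong _ XX YY
  · intro i
    fin_cases i
    · exact ⟨ga, show hdw ga = some La by decide⟩
    · exact ⟨gb, show hdw gb = some Lb by decide⟩
  · intro i j hij
    show Disjoint (XX i) (XX j)
    fin_cases i <;> fin_cases j <;>
      first
        | exact absurd rfl hij
        | exact disj_hdw _ _ (by decide)
  · intro i j hij
    show Disjoint (YY i) (YY j)
    fin_cases i <;> fin_cases j <;>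
      first
        | exact absurd rfl hij
        | exact disj_hdw _ _ (by decide)
  · intro i j
    fin_cases i <;> fin_cases j <;> exact disj_hdw _ _ (by decide)
  · intro i
    fin_cases i
    · intro y hy
      obtain ⟨w, hw, rfl⟩ := hy
      have hw' : hdw w ≠ some La' := by simpa [YY0, Set.mem_compl_iff] using hw
      show hdw (![ga * ga, gb * gb] 0 • w) = some La
      have : (![ga * ga, gb * gb] 0 : F) • w = ga * (ga * w) := by
        simp [smul_eq_mul, mul_assoc]
      rw [this]
      exact hdw_ga_mul _ (by rw [hdw_ga_mul _ hw']; decide)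
    · intro y hy
      obtain ⟨w, hw, rfl⟩ := hy
      have hw' : hdw w ≠ some Lb' := by simpa [YY1, Set.mem_compl_iff] using hw
      show hdw (![ga * ga, gb * gb] 1 • w) = some Lb
      have : (![ga * ga, gb * gb] 1 : F) • w = gb * (gb * w) := by
        simp [smul_eq_mul, mul_assoc]
      rw [this]
      exact hdw_gb_mul _ (by rw [hdw_gb_mul _ hw']; decide)
  · intro i
    fin_cases i
    · intro y hy
      obtain ⟨w, hw, rfl⟩ := hy
      have hw' : hdw w ≠ some La := by simpa [XX0, Set.mem_compl_iff] using hw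
      show hdw ((![ga * ga, gb * gb])⁻¹ 0 • w) = some La'
      have : ((![ga * ga, gb * gb])⁻¹ 0 : F) • w = ga⁻¹ * (ga⁻¹ * w) := by
        simp [smul_eq_mul, Pi.inv_apply, mul_inv_rev, mul_assoc]
      rw [this]
      exact hdw_ga_inv_mul _ (by rw [hdw_ga_inv_mul _ hw']; decide)
    · intro y hy
      obtain ⟨w, hw, rfl⟩ := hy
      have hw' : hdw w ≠ some Lb := by simpa [XX1, Set.mem_compl_iff] using hw
      show hdw ((![ga * ga, gb * gb])⁻¹ 1 • w) = some Lb'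
      have : ((![ga * ga, gb * gb])⁻¹ 1 : F) • w = gb⁻¹ * (gb⁻¹ * w) := by
        simp [smul_eq_mul, Pi.inv_apply, mul_inv_rev, mul_assoc]
      rw [this]
      exact hdw_gb_inv_mul _ (by rw [hdw_gb_inv_mul _ hw']; decide)

end NCA
namespace NCA

open FreeGroup

lemma act_mem_Stab {g : F} (h : g ∈ Stab) : act g y₀ = y₀ := h

noncomputable def φ : F ⧸ θ.range → F := fun x =>
  Quotient.liftOn' x (fun g => act g y₀) (by
    intro a b hab
    rw [QuotientGroup.leftRel_apply] at hab
    have hb : b = a * (a⁻¹ * b) := by group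
    show act a y₀ = act b y₀
    rw [hb, _root_.map_mul, Equiv.Perm.mul_apply,
      act_mem_Stab (θ_range_le_Stab hab)])

lemma φ_mk (g : F) : φ (QuotientGroup.mk g) = act g y₀ := rfl

lemma φ_smul (g : F) (x : F ⧸ θ.range) : φ (g • x) = act g (φ x) := by
  induction x using Quotient.inductionOn' with
  | h h =>
    show φ (g • QuotientGroup.mk h) = act g (φ (QuotientGroup.mk h))
    rw [MulAction.Quotient.smul_mk, φ_mk, φ_mk, smul_eq_mul, _root_.map_mul,
      Equiv.Perm.mul_apply]

noncomputable def ind (S : F → Prop) [DecidablePred S] : F → ℝ :=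
  fun y => if S y then 1 else 0

lemma ind_nonneg (S : F → Prop) [DecidablePred S] (y : F) : 0 ≤ ind S y := by
  unfold ind; split <;> norm_num

lemma ind_le_one (S : F → Prop) [DecidablePred S] (y : F) : ind S y ≤ 1 := by
  unfold ind; split <;> norm_num

noncomputable def bf (S : F → Prop) [DecidablePred S] : BddFns (F ⧸ θ.range) :=
  ⟨fun x => ind S (φ x), ⟨1, fun x => by
    rw [abs_le]; exact ⟨by linarith [ind_nonneg S (φ x)], ind_le_one S (φ x)⟩⟩⟩

noncomputable def oneB : BddFns (F ⧸ θ.range) := ⟨(fun _ => 1), ⟨1, fun _ => by norm_num⟩⟩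

section Mean

variable (m : InvariantMean F (F ⧸ θ.range))

lemma mean_mono (f g : BddFns (F ⧸ θ.range))
    (h : ∀ x, (↑f : (F ⧸ θ.range) → ℝ) x ≤ (↑g : (F ⧸ θ.range) → ℝ) x) :
    m.toFun f ≤ m.toFun g := by
  have h0 : 0 ≤ m.toFun (g - f) := by
    apply m.nonneg
    intro x
    have := h x
    have hc : (↑(g - f) : (F ⧸ θ.range) → ℝ) x
        = (↑g : (F ⧸ θ.range) → ℝ) x - (↑f : (F ⧸ θ.range) → ℝ) x := rfl
    rw [hc]
    linarith
  have hsub : m.toFun (g - f) = m.toFun g - m.toFun f := m.toFun.map_sub g f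
  linarith

lemma ind_pair {S T : F → Prop} [DecidablePred S] [DecidablePred T] {y z : F}
    (h : S y ∨ T z) : (1:ℝ) ≤ ind S y + ind T z := by
  rcases h with h | h
  · have h2 := ind_nonneg T z
    unfold ind at h2 ⊢
    rw [if_pos h]
    linarith
  · have h2 := ind_nonneg S y
    unfold ind at h2 ⊢
    rw [if_pos h]
    linarith

lemma mean_pair (g : F) (S T : F → Prop) [DecidablePred S] [DecidablePred T]
    (h : ∀ y : F, S y ∨ T ((act g)⁻¹ y)) :
    1 ≤ m.toFun (bf S) + m.toFun (bf T) := by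
  set sh : BddFns (F ⧸ θ.range) :=
    ⟨lshift g ((bf T) : _ → ℝ), lshift_mem g (bf T).2⟩ with hsh
  have hinv : m.toFun sh = m.toFun (bf T) := m.invariant g (bf T)
  have hpt : ∀ x, (↑oneB : (F ⧸ θ.range) → ℝ) x
      ≤ (↑(bf S + sh) : (F ⧸ θ.range) → ℝ) x := by
    intro x
    have hc : (↑(bf S + sh) : (F ⧸ θ.range) → ℝ) x
        = ind S (φ x) + ind T (φ (g⁻¹ • x)) := rfl
    rw [hc]
    show (1:ℝ) ≤ _
    apply ind_pair
    rw [φ_smul, _root_.map_inv]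
    exact h (φ x)
  have h1 : m.toFun oneB ≤ m.toFun (bf S + sh) := mean_mono m _ _ hpt
  have h2 : m.toFun (bf S + sh) = m.toFun (bf S) + m.toFun sh := m.toFun.map_add _ _
  have h3 : m.toFun oneB = 1 := m.norm_one
  linarith

lemma mean_contradiction (m : InvariantMean F (F ⧸ θ.range)) : False := by
  have k1 : 1 ≤ m.toFun (bf S₁) + m.toFun (bf S₂) := by
    apply mean_pair m ga S₁ S₂
    intro y
    rw [act_ga]
    exact cond1 y
  have k2 : 1 ≤ m.toFun (bf S₃) + m.toFun (bf S₄) := by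
    apply mean_pair m gb S₃ S₄
    intro y
    rw [act_gb]
    exact cond2 y
  have k3 : 1 ≤ m.toFun (bf S₅) + m.toFun (bf S₆) := by
    apply mean_pair m (ga * gb) S₅ S₆
    intro y
    have : (act (ga * gb))⁻¹ y = B⁻¹ (A⁻¹ y) := by
      rw [_root_.map_mul, act_ga, act_gb, mul_inv_rev, Equiv.Perm.mul_apply]
    rw [this]
    exact cond3 y
  -- upper bound
  have hup : m.toFun (bf S₁ + bf S₂ + bf S₃ + bf S₄ + bf S₅ + bf S₆)
      ≤ m.toFun ((2:ℝ) • oneB) := by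
    apply mean_mono
    intro x
    have hc : (↑(bf S₁ + bf S₂ + bf S₃ + bf S₄ + bf S₅ + bf S₆) : (F ⧸ θ.range) → ℝ) x
        = ind S₁ (φ x) + ind S₂ (φ x) + ind S₃ (φ x) + ind S₄ (φ x) + ind S₅ (φ x)
          + ind S₆ (φ x) := rfl
    have hc2 : (↑((2:ℝ) • oneB) : (F ⧸ θ.range) → ℝ) x = 2 := by
      show (2:ℝ) * 1 = 2
      norm_num
    rw [hc, hc2]
    exact sum_le_two (φ x)
  have hL : m.toFun (bf S₁ + bf S₂ + bf S₃ + bf S₄ + bf S₅ + bf S₆)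
      = m.toFun (bf S₁) + m.toFun (bf S₂) + m.toFun (bf S₃) + m.toFun (bf S₄)
        + m.toFun (bf S₅) + m.toFun (bf S₆) := by
    simp only [m.toFun.map_add]
  have hR : m.toFun ((2:ℝ) • oneB) = 2 := by
    have hone : m.toFun oneB = 1 := m.norm_one
    rw [m.toFun.map_smul, hone]
    norm_num
  rw [hL, hR] at hup
  linarith

end Mean

end NCA

/-- There is an injective endomorphism `θ` of the free group `F₂` on two generators
whose image `θ(F₂)` is not co-amenable in `F₂`. -/
theorem exists_injective_endo_range_not_coamenable :
    ∃ θ : FreeGroup (Fin 2) →* FreeGroup (Fin 2),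
      Function.Injective θ ∧ ¬ θ.range.Coamenable := by
  refine ⟨NCA.θ, NCA.θ_injective, ?_⟩
  rintro ⟨m⟩
  exact NCA.mean_contradiction m
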